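/- arXiv:1911.10485 — 2 statements merged into one kernel-verified Lean document; each statement's English description precedes it below -/
import Mathlib

section
/- In any coloring of the points of a finite projective plane with three colors such that every line contains at most 2 colors (no line contains points of all three colors), there exists a color class that is contained in a single line. -/
open Set

variable {α : Type*}

/-- The ground set of the matroid `M` can be partitioned into `k` independent sets. -/
def Matroid.IsColorable (M : Matroid α) (k : ℕ) : Prop :=
  ∃ I : Fin k → Set α, (∀ i, M.Indep (I i)) ∧ (⋃ i, I i) = M.E ∧
    Pairwise fun i j => Disjoint (I i) (I j)

/-- The coloring number of the matroid `M`: the minimum number of independent sets into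
which the ground set can be partitioned. -/
noncomputable def Matroid.chi (M : Matroid α) : ℕ := sInf {k | M.IsColorable k}

/-- The (extended, cardinality-valued) rank of the matroid `M`. -/
noncomputable def Matroid.rkE (M : Matroid α) : ℕ∞ := ⨆ I ∈ {I | M.Indep I}, I.encard

/-- `N` is the partition matroid determined by the partition `P` of its ground set:
a set is independent iff it meets every class of `P` in at most one element. -/
def Matroid.IsPartitionMatroid (N : Matroid α) (P : Set (Set α)) : Prop :=
  ⋃₀ P = N.E ∧ (∀ c ∈ P, ∀ c' ∈ P, c ≠ c' → Disjoint c c') ∧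
    ∀ X, N.Indep X ↔ X ⊆ N.E ∧ ∀ c ∈ P, (X ∩ c).encard ≤ 1

/-- `N` is a reduction of `M` (written `N ⪯ M`): every `N`-independent set is
`M`-independent. -/
def Matroid.Reduction (N M : Matroid α) : Prop :=
  N.E = M.E ∧ ∀ I, N.Indep I → M.Indep I

/-- `M` is a paving matroid of rank `r`: it has rank `r` and every subset of the ground
set of size at most `r - 1` is independent. -/
def Matroid.IsPavingOfRank (M : Matroid α) (r : ℕ) : Prop :=
  M.rkE = (r : ℕ∞) ∧ ∀ X ⊆ M.E, X.encard ≤ ((r - 1 : ℕ) : ℕ∞) → M.Indep X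

/-- A cut (cocircuit) of the matroid `M`: an inclusionwise minimal subset of the ground
set intersecting every basis. -/
def Matroid.IsCut (M : Matroid α) (X : Set α) : Prop :=
  X ⊆ M.E ∧ (∀ B, M.IsBase B → (X ∩ B).Nonempty) ∧
    ∀ Y, Y ⊂ X → ∃ B, M.IsBase B ∧ Y ∩ B = ∅

section AuxPP

variable {α : Type*}

private lemma fin3_cases' : ∀ i x y z : Fin 3, x ≠ i → y ≠ i → z ≠ i → x ≠ y → z = x ∨ z = y := by
  decide

private lemma fin3_rainbow' : ∀ i x y z : Fin 3, x ≠ i → y ≠ i → z ≠ i → x ≠ y → x ≠ z → y ≠ z → False := by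
  decide

/-- color class -/
def clsPP (S : Set α) (c : α → Fin 3) (i : Fin 3) : Set α := {p ∈ S | c p = i}

/-- pencil of lines through `p` meeting color class `i` -/
def penPP (S : Set α) (L : Set (Set α)) (c : α → Fin 3) (i : Fin 3) (p : α) : Set (Set α) :=
  {ℓ | ℓ ∈ L ∧ p ∈ ℓ ∧ (ℓ ∩ clsPP S c i).Nonempty}

variable {S : Set α} {L : Set (Set α)} {c : α → Fin 3}

lemma colors2PP (hc : ∀ ℓ ∈ L, ∃ i : Fin 3, ∀ p ∈ ℓ, c p ≠ i) {ℓ : Set α} (hℓ : ℓ ∈ L)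
    {x y z : α} (hx : x ∈ ℓ) (hy : y ∈ ℓ) (hz : z ∈ ℓ) (hxy : c x ≠ c y) :
    c z = c x ∨ c z = c y := by
  obtain ⟨i, hi⟩ := hc ℓ hℓ
  exact fin3_cases' i (c x) (c y) (c z) (hi x hx) (hi y hy) (hi z hz) hxy

lemma no_rainbowPP (hc : ∀ ℓ ∈ L, ∃ i : Fin 3, ∀ p ∈ ℓ, c p ≠ i) {ℓ : Set α} (hℓ : ℓ ∈ L)
    {x y z : α} (hx : x ∈ ℓ) (hy : y ∈ ℓ) (hz : z ∈ ℓ) (hxy : c x ≠ c y) (hxz : c x ≠ c z)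
    (hyz : c y ≠ c z) : False := by
  obtain ⟨i, hi⟩ := hc ℓ hℓ
  exact fin3_rainbow' i (c x) (c y) (c z) (hi x hx) (hi y hy) (hi z hz) hxy hxz hyz

lemma proj_countPP (hP1 : ∀ p ∈ S, ∀ p' ∈ S, p ≠ p' → ∃! ℓ, ℓ ∈ L ∧ p ∈ ℓ ∧ p' ∈ ℓ)
    (hLS : ∀ ℓ ∈ L, ℓ ⊆ S) {m : Set α} (hm : m ∈ L) {p : α} (hp : p ∈ S) (hpm : p ∉ m)
    {T : Set α} (hT : T ⊆ m) :
    {ℓ | ℓ ∈ L ∧ p ∈ ℓ ∧ (ℓ ∩ T).Nonempty}.ncard = T.ncard := by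
  classical
  have hjoin : ∀ t, ∃ ℓ, t ∈ T → ℓ ∈ L ∧ p ∈ ℓ ∧ t ∈ ℓ ∧
      ∀ ℓ' ∈ L, p ∈ ℓ' → t ∈ ℓ' → ℓ' = ℓ := by
    intro t
    by_cases ht : t ∈ T
    · have htS : t ∈ S := hLS m hm (hT ht)
      have hpt : p ≠ t := fun h => hpm (h ▸ hT ht)
      obtain ⟨ℓ, ⟨hℓL, hpℓ, htℓ⟩, huniq⟩ := hP1 p hp t htS hpt
      exact ⟨ℓ, fun _ => ⟨hℓL, hpℓ, htℓ, fun ℓ' h1 h2 h3 => huniq ℓ' ⟨h1, h2, h3⟩⟩⟩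
    · exact ⟨∅, fun h => absurd h ht⟩
  choose f hf using hjoin
  have himg : {ℓ | ℓ ∈ L ∧ p ∈ ℓ ∧ (ℓ ∩ T).Nonempty} = f '' T := by
    ext ℓ
    constructor
    · rintro ⟨hℓL, hpℓ, t, htℓ, htT⟩
      exact ⟨t, htT, ((hf t htT).2.2.2 ℓ hℓL hpℓ htℓ).symm⟩
    · rintro ⟨t, htT, rfl⟩
      obtain ⟨h1, h2, h3, _⟩ := hf t htT
      exact ⟨h1, h2, t, h3, htT⟩
  rw [himg]
  apply Set.ncard_image_of_injOn
  intro t ht t' ht' hft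
  by_contra hne
  obtain ⟨h1, h2, h3, _⟩ := hf t ht
  obtain ⟨h1', h2', h3', _⟩ := hf t' ht'
  obtain ⟨ℓ0, _, huniq⟩ := hP1 t (hLS m hm (hT ht)) t' (hLS m hm (hT ht')) hne
  have e1 : f t = ℓ0 := huniq _ ⟨h1, h3, hft ▸ h3'⟩
  have e2 : m = ℓ0 := huniq _ ⟨hm, hT ht, hT ht'⟩
  exact hpm (e2 ▸ e1 ▸ h2)

lemma count_eqPP (hP1 : ∀ p ∈ S, ∀ p' ∈ S, p ≠ p' → ∃! ℓ, ℓ ∈ L ∧ p ∈ ℓ ∧ p' ∈ ℓ)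
    (hP2 : ∀ ℓ ∈ L, ∀ ℓ' ∈ L, ℓ ≠ ℓ' → ∃! p, p ∈ ℓ ∩ ℓ')
    (hLS : ∀ ℓ ∈ L, ℓ ⊆ S) (hc : ∀ ℓ ∈ L, ∃ i : Fin 3, ∀ p ∈ ℓ, c p ≠ i)
    {i j k : Fin 3} (hij : i ≠ j) (hik : i ≠ k) (hjk : j ≠ k)
    {p : α} (hp : p ∈ S) (hcp : c p = k)
    {m : Set α} (hm : m ∈ L) (hmi : (m ∩ clsPP S c i).Nonempty)
    (hmj : (m ∩ clsPP S c j).Nonempty) :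
    (m ∩ clsPP S c i).ncard = (penPP S L c i p).ncard := by
  obtain ⟨x, hxm, hxS, hcx⟩ := hmi
  obtain ⟨y, hym, hyS, hcy⟩ := hmj
  have hpm : p ∉ m := by
    intro hpmem
    exact no_rainbowPP hc hm hxm hym hpmem (by rw [hcx, hcy]; exact hij)
      (by rw [hcx, hcp]; exact hik) (by rw [hcy, hcp]; exact hjk)
  have hpen : penPP S L c i p = {ℓ | ℓ ∈ L ∧ p ∈ ℓ ∧ (ℓ ∩ (m ∩ clsPP S c i)).Nonempty} := by
    ext ℓ
    constructor
    · rintro ⟨hℓL, hpℓ, z, hzℓ, hzS, hcz⟩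
      have hℓm : ℓ ≠ m := fun h => hpm (h ▸ hpℓ)
      obtain ⟨t, ⟨htℓ, htm⟩, _⟩ := hP2 ℓ hℓL m hm hℓm
      have ht1 : c t = c x ∨ c t = c y := colors2PP hc hm hxm hym htm (by rw [hcx, hcy]; exact hij)
      have ht2 : c t = c p ∨ c t = c z := colors2PP hc hℓL hpℓ hzℓ htℓ (by rw [hcp, hcz]; exact hik.symm)
      have hct : c t = i := by
        rw [hcx, hcy] at ht1; rw [hcp, hcz] at ht2
        rcases ht1 with h | h
        · exact h
        · rcases ht2 with h' | h'
          · exact absurd (h ▸ h') hjk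
          · exact absurd (h ▸ h') (hij.symm)
      exact ⟨hℓL, hpℓ, t, htℓ, htm, hLS m hm htm, hct⟩
    · rintro ⟨hℓL, hpℓ, z, hzℓ, _, hzcls⟩
      exact ⟨hℓL, hpℓ, z, hzℓ, hzcls⟩
  rw [hpen]
  exact (proj_countPP hP1 hLS hm hp hpm Set.inter_subset_left).symm

lemma sum_piecesPP (P : Finset (Set α)) {Y : Set α} (hY : Y.Finite)
    (cover : ∀ y ∈ Y, ∃! ℓ, ℓ ∈ P ∧ y ∈ ℓ) :
    Y.ncard = ∑ ℓ ∈ P, (ℓ ∩ Y).ncard := by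
  classical
  have key : hY.toFinset = P.biUnion (fun ℓ => hY.toFinset.filter (fun y => y ∈ ℓ)) := by
    ext y
    simp only [Finset.mem_biUnion, Finset.mem_filter, Set.Finite.mem_toFinset]
    constructor
    · intro hy
      obtain ⟨ℓ, ⟨hℓP, hyℓ⟩, _⟩ := cover y hy
      exact ⟨ℓ, hℓP, hy, hyℓ⟩
    · rintro ⟨ℓ, _, hy, _⟩; exact hy
  have hdisj : ∀ ℓ ∈ P, ∀ ℓ' ∈ P, ℓ ≠ ℓ' →
      Disjoint (hY.toFinset.filter (fun y => y ∈ ℓ)) (hY.toFinset.filter (fun y => y ∈ ℓ')) := by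
    intro ℓ hℓ ℓ' hℓ' hne
    rw [Finset.disjoint_left]
    rintro y hy hy'
    simp only [Finset.mem_filter, Set.Finite.mem_toFinset] at hy hy'
    obtain ⟨ℓ0, _, huniq⟩ := cover y hy.1
    exact hne ((huniq ℓ ⟨hℓ, hy.2⟩).trans (huniq ℓ' ⟨hℓ', hy'.2⟩).symm)
  have hterm : ∀ ℓ ∈ P, (hY.toFinset.filter (fun y => y ∈ ℓ)).card = (ℓ ∩ Y).ncard := by
    intro ℓ _
    have : (ℓ ∩ Y) = ↑(hY.toFinset.filter (fun y => y ∈ ℓ)) := by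
      ext y
      simp only [Finset.coe_filter, Set.Finite.mem_toFinset, Set.mem_inter_iff, Set.mem_setOf_eq]
      tauto
    rw [this, Set.ncard_coe_finset]
  rw [Set.ncard_eq_toFinset_card _ hY, key, Finset.card_biUnion hdisj]
  exact Finset.sum_congr rfl hterm

lemma two_lePP (hP1 : ∀ p ∈ S, ∀ p' ∈ S, p ≠ p' → ∃! ℓ, ℓ ∈ L ∧ p ∈ ℓ ∧ p' ∈ ℓ)
    (hLfin : L.Finite) {i : Fin 3} {p : α} (hp : p ∈ S) (hcp : c p ≠ i)
    (hne : (clsPP S c i).Nonempty) (hnc : ∀ ℓ ∈ L, ¬ clsPP S c i ⊆ ℓ) :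
    2 ≤ (penPP S L c i p).ncard := by
  obtain ⟨x, hxS, hcx⟩ := hne
  have hpx : p ≠ x := fun h => hcp (h ▸ hcx)
  obtain ⟨ℓ1, ⟨hℓ1L, hpℓ1, hxℓ1⟩, _⟩ := hP1 p hp x hxS hpx
  obtain ⟨x', hx'cls, hx'ℓ1⟩ := Set.not_subset.mp (hnc ℓ1 hℓ1L)
  obtain ⟨hx'S, hcx'⟩ := hx'cls
  have hpx' : p ≠ x' := fun h => hcp (h ▸ hcx')
  obtain ⟨ℓ2, ⟨hℓ2L, hpℓ2, hx'ℓ2⟩, _⟩ := hP1 p hp x' hx'S hpx'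
  have hfin : (penPP S L c i p).Finite := hLfin.subset (fun ℓ hℓ => hℓ.1)
  rw [show (2 : ℕ) = 1 + 1 from rfl]
  have h12 : ℓ1 ≠ ℓ2 := fun h => hx'ℓ1 (h ▸ hx'ℓ2)
  have := (Set.one_lt_ncard_iff hfin).mpr
    ⟨ℓ1, ℓ2, ⟨hℓ1L, hpℓ1, x, hxℓ1, hxS, hcx⟩, ⟨hℓ2L, hpℓ2, x', hx'ℓ2, hx'S, hcx'⟩, h12⟩
  omega

lemma cover1PP (hP1 : ∀ p ∈ S, ∀ p' ∈ S, p ≠ p' → ∃! ℓ, ℓ ∈ L ∧ p ∈ ℓ ∧ p' ∈ ℓ)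
    {i : Fin 3} {p : α} (hp : p ∈ S) (hcp : c p ≠ i) :
    ∀ y ∈ clsPP S c i, ∃! ℓ, ℓ ∈ penPP S L c i p ∧ y ∈ ℓ := by
  rintro y ⟨hyS, hcy⟩
  have hpy : p ≠ y := fun h => hcp (h ▸ hcy)
  obtain ⟨ℓ, ⟨hℓL, hpℓ, hyℓ⟩, huniq⟩ := hP1 p hp y hyS hpy
  refine ⟨ℓ, ⟨⟨hℓL, hpℓ, y, hyℓ, hyS, hcy⟩, hyℓ⟩, ?_⟩
  rintro ℓ' ⟨⟨hℓ'L, hpℓ', _⟩, hyℓ'⟩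
  exact huniq ℓ' ⟨hℓ'L, hpℓ', hyℓ'⟩

lemma cover2PP (hP1 : ∀ p ∈ S, ∀ p' ∈ S, p ≠ p' → ∃! ℓ, ℓ ∈ L ∧ p ∈ ℓ ∧ p' ∈ ℓ)
    (hP2 : ∀ ℓ ∈ L, ∀ ℓ' ∈ L, ℓ ≠ ℓ' → ∃! p, p ∈ ℓ ∩ ℓ')
    (hLS : ∀ ℓ ∈ L, ℓ ⊆ S) (hc : ∀ ℓ ∈ L, ∃ i : Fin 3, ∀ p ∈ ℓ, c p ≠ i)
    {i j k : Fin 3} (hij : i ≠ j) (hik : i ≠ k) (hjk : j ≠ k)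
    {p : α} (hp : p ∈ S) (hcp : c p = i)
    {m : Set α} (hm : m ∈ L) (hmj : (m ∩ clsPP S c j).Nonempty)
    (hmk : (m ∩ clsPP S c k).Nonempty) :
    ∀ y ∈ clsPP S c i \ {p}, ∃! ℓ, ℓ ∈ penPP S L c j p ∪ penPP S L c k p ∧ y ∈ ℓ := by
  obtain ⟨x, hxm, hxS, hcx⟩ := hmj
  obtain ⟨z, hzm, hzS, hcz⟩ := hmk
  have hpm : p ∉ m := by
    intro hpmem
    exact no_rainbowPP hc hm hxm hzm hpmem (by rw [hcx, hcz]; exact hjk)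
      (by rw [hcx, hcp]; exact fun h => hij h.symm) (by rw [hcz, hcp]; exact fun h => hik h.symm)
  rintro y ⟨⟨hyS, hcy⟩, hyp⟩
  have hpy : p ≠ y := fun h => hyp (by simp [h.symm])
  obtain ⟨ℓ, ⟨hℓL, hpℓ, hyℓ⟩, huniq⟩ := hP1 p hp y hyS hpy
  have hℓm : ℓ ≠ m := fun h => hpm (h ▸ hpℓ)
  obtain ⟨t, ⟨htℓ, htm⟩, _⟩ := hP2 ℓ hℓL m hm hℓm
  have ht1 : c t = c x ∨ c t = c z := colors2PP hc hm hxm hzm htm (by rw [hcx, hcz]; exact hjk)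
  have htS : t ∈ S := hLS m hm htm
  have hmem : ℓ ∈ penPP S L c j p ∪ penPP S L c k p := by
    rcases ht1 with h | h
    · exact Or.inl ⟨hℓL, hpℓ, t, htℓ, htS, h.trans hcx⟩
    · exact Or.inr ⟨hℓL, hpℓ, t, htℓ, htS, h.trans hcz⟩
  refine ⟨ℓ, ⟨hmem, hyℓ⟩, ?_⟩
  rintro ℓ' ⟨hℓ', hyℓ'⟩
  rcases hℓ' with ⟨hℓ'L, hpℓ', _⟩ | ⟨hℓ'L, hpℓ', _⟩ <;> exact huniq ℓ' ⟨hℓ'L, hpℓ', hyℓ'⟩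

end AuxPP

/-- In any 3-coloring of the points of a finite projective plane in which every line
misses some color, some color class is contained in a single line. -/
theorem statement_14 (S : Set α) (L : Set (Set α)) (hfin : S.Finite)
    (hLS : ∀ ℓ ∈ L, ℓ ⊆ S)
    (hP1 : ∀ p ∈ S, ∀ p' ∈ S, p ≠ p' → ∃! ℓ, ℓ ∈ L ∧ p ∈ ℓ ∧ p' ∈ ℓ)
    (hP2 : ∀ ℓ ∈ L, ∀ ℓ' ∈ L, ℓ ≠ ℓ' → ∃! p, p ∈ ℓ ∩ ℓ')
    (hP3 : ∃ p₁ p₂ p₃ p₄ : α, ({p₁, p₂, p₃, p₄} : Set α) ⊆ S ∧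
      ({p₁, p₂, p₃, p₄} : Set α).encard = 4 ∧
      ∀ ℓ ∈ L, (({p₁, p₂, p₃, p₄} : Set α) ∩ ℓ).encard ≤ 2)
    (c : α → Fin 3)
    (hc : ∀ ℓ ∈ L, ∃ i : Fin 3, ∀ p ∈ ℓ, c p ≠ i) :
    ∃ i : Fin 3, ∃ ℓ ∈ L, {p ∈ S | c p = i} ⊆ ℓ := by
  classical
  by_contra hcon
  push_neg at hcon
  have hnc : ∀ i : Fin 3, ∀ ℓ ∈ L, ¬ clsPP S c i ⊆ ℓ := hcon
  -- find a line
  obtain ⟨p₁, p₂, p₃, p₄, hsub, hcard, -⟩ := hP3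
  have hne12 : p₁ ≠ p₂ := by
    rintro rfl
    rw [Set.insert_idem] at hcard
    have h3 : ({p₁, p₃, p₄} : Set α).encard ≤ 3 := by
      calc ({p₁, p₃, p₄} : Set α).encard ≤ ({p₃, p₄} : Set α).encard + 1 :=
            Set.encard_insert_le _ _
        _ ≤ (({p₄} : Set α).encard + 1) + 1 := by
            gcongr
            exact Set.encard_insert_le _ _
        _ = 3 := by rw [Set.encard_singleton]; norm_num
    rw [hcard] at h3
    norm_num at h3
  obtain ⟨ℓ0, ⟨hℓ0L, -, -⟩, -⟩ := hP1 p₁ (hsub (by simp)) p₂ (hsub (by simp)) hne12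
  -- classes are nonempty
  have hXne : ∀ i : Fin 3, (clsPP S c i).Nonempty := by
    intro i
    rcases (clsPP S c i).eq_empty_or_nonempty with h | h
    · exact absurd (by rw [h]; exact Set.empty_subset ℓ0) (hnc i ℓ0 hℓ0L)
    · exact h
  obtain ⟨pa, paS, hpa⟩ := hXne 0
  obtain ⟨pb, pbS, hpb⟩ := hXne 1
  obtain ⟨pc, pcS, hpc⟩ := hXne 2
  have hLfin : L.Finite := hfin.finite_subsets.subset hLS
  have hclsfin : ∀ i : Fin 3, (clsPP S c i).Finite := fun i => hfin.subset (fun x hx => hx.1)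
  have pfin : ∀ (i : Fin 3) (p : α), (penPP S L c i p).Finite :=
    fun i p => hLfin.subset (fun ℓ hℓ => hℓ.1)
  -- two special lines
  have hbc : pb ≠ pc := by intro h; rw [h, hpc] at hpb; exact absurd hpb (by decide)
  have hca : pc ≠ pa := by intro h; rw [h, hpa] at hpc; exact absurd hpc (by decide)
  obtain ⟨mbc, ⟨hmbcL, hbmbc, hcmbc⟩, -⟩ := hP1 pb pbS pc pcS hbc
  obtain ⟨mca, ⟨hmcaL, hcmca, hamca⟩, -⟩ := hP1 pc pcS pa paS hca
  -- the six pencil counts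
  have h2a0 : 2 ≤ (penPP S L c 0 pc).ncard :=
    two_lePP hP1 hLfin pcS (by rw [hpc]; decide) (hXne 0) (hnc 0)
  have h2a1 : 2 ≤ (penPP S L c 0 pb).ncard :=
    two_lePP hP1 hLfin pbS (by rw [hpb]; decide) (hXne 0) (hnc 0)
  have h2b0 : 2 ≤ (penPP S L c 1 pc).ncard :=
    two_lePP hP1 hLfin pcS (by rw [hpc]; decide) (hXne 1) (hnc 1)
  have h2b2 : 2 ≤ (penPP S L c 1 pa).ncard :=
    two_lePP hP1 hLfin paS (by rw [hpa]; decide) (hXne 1) (hnc 1)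
  have h2c1 : 2 ≤ (penPP S L c 2 pb).ncard :=
    two_lePP hP1 hLfin pbS (by rw [hpb]; decide) (hXne 2) (hnc 2)
  have h2c2 : 2 ≤ (penPP S L c 2 pa).ncard :=
    two_lePP hP1 hLfin paS (by rw [hpa]; decide) (hXne 2) (hnc 2)
  -- Equation 1 : |A| = a1 * a0   (counting A along lines through pb)
  have E1 : (clsPP S c 0).ncard = (penPP S L c 0 pb).ncard * (penPP S L c 0 pc).ncard := by
    have e := sum_piecesPP (pfin 0 pb).toFinset (hclsfin 0) ?_
    · rw [e, Finset.sum_congr rfl ?_, Finset.sum_const, smul_eq_mul,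
        ← Set.ncard_eq_toFinset_card _ (pfin 0 pb)]
      intro ℓ hℓ
      obtain ⟨hℓL, hbℓ, hmeet⟩ := (Set.Finite.mem_toFinset _).mp hℓ
      exact count_eqPP hP1 hP2 hLS hc (by decide) (by decide) (by decide) pcS hpc hℓL hmeet
        ⟨pb, hbℓ, pbS, hpb⟩
    · intro y hy
      obtain ⟨ℓ, ⟨hpen, hyℓ⟩, hu⟩ := cover1PP hP1 pbS (by rw [hpb]; decide) y hy
      exact ⟨ℓ, ⟨(Set.Finite.mem_toFinset _).mpr hpen, hyℓ⟩,
        fun ℓ' h => hu ℓ' ⟨(Set.Finite.mem_toFinset _).mp h.1, h.2⟩⟩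
  -- Equation 2 : |B| = b2 * b0
  have E2 : (clsPP S c 1).ncard = (penPP S L c 1 pa).ncard * (penPP S L c 1 pc).ncard := by
    have e := sum_piecesPP (pfin 1 pa).toFinset (hclsfin 1) ?_
    · rw [e, Finset.sum_congr rfl ?_, Finset.sum_const, smul_eq_mul,
        ← Set.ncard_eq_toFinset_card _ (pfin 1 pa)]
      intro ℓ hℓ
      obtain ⟨hℓL, haℓ, hmeet⟩ := (Set.Finite.mem_toFinset _).mp hℓ
      exact count_eqPP hP1 hP2 hLS hc (by decide) (by decide) (by decide) pcS hpc hℓL hmeet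
        ⟨pa, haℓ, paS, hpa⟩
    · intro y hy
      obtain ⟨ℓ, ⟨hpen, hyℓ⟩, hu⟩ := cover1PP hP1 paS (by rw [hpa]; decide) y hy
      exact ⟨ℓ, ⟨(Set.Finite.mem_toFinset _).mpr hpen, hyℓ⟩,
        fun ℓ' h => hu ℓ' ⟨(Set.Finite.mem_toFinset _).mp h.1, h.2⟩⟩
  -- disjointness of the two halves of the pencil at pa
  have hdisj_a : Disjoint (pfin 1 pa).toFinset (pfin 2 pa).toFinset := by
    rw [Finset.disjoint_left]
    rintro ℓ h1 h2
    obtain ⟨hℓL, haℓ, x, hxℓ, hxS, hcx⟩ := (Set.Finite.mem_toFinset _).mp h1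
    obtain ⟨-, -, z, hzℓ, hzS, hcz⟩ := (Set.Finite.mem_toFinset _).mp h2
    exact no_rainbowPP hc hℓL haℓ hxℓ hzℓ (by rw [hpa, hcx]; decide)
      (by rw [hpa, hcz]; decide) (by rw [hcx, hcz]; decide)
  have hdisj_b : Disjoint (pfin 0 pb).toFinset (pfin 2 pb).toFinset := by
    rw [Finset.disjoint_left]
    rintro ℓ h1 h2
    obtain ⟨hℓL, hbℓ, x, hxℓ, hxS, hcx⟩ := (Set.Finite.mem_toFinset _).mp h1
    obtain ⟨-, -, z, hzℓ, hzS, hcz⟩ := (Set.Finite.mem_toFinset _).mp h2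
    exact no_rainbowPP hc hℓL hbℓ hxℓ hzℓ (by rw [hpb, hcx]; decide)
      (by rw [hpb, hcz]; decide) (by rw [hcx, hcz]; decide)
  -- Equation 3 : |A| - 1 = b2 * (a0 - 1) + c2 * (a1 - 1)
  have E3 : (clsPP S c 0).ncard - 1 =
      (penPP S L c 1 pa).ncard * ((penPP S L c 0 pc).ncard - 1) +
      (penPP S L c 2 pa).ncard * ((penPP S L c 0 pb).ncard - 1) := by
    have cover3 : ∀ y ∈ clsPP S c 0 \ {pa},
        ∃! ℓ, ℓ ∈ (pfin 1 pa).toFinset ∪ (pfin 2 pa).toFinset ∧ y ∈ ℓ := by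
      intro y hy
      obtain ⟨ℓ, ⟨hpen, hyℓ⟩, hu⟩ := cover2PP hP1 hP2 hLS hc (show (0:Fin 3) ≠ 1 by decide)
        (show (0:Fin 3) ≠ 2 by decide) (show (1:Fin 3) ≠ 2 by decide) paS hpa hmbcL
        ⟨pb, hbmbc, pbS, hpb⟩ ⟨pc, hcmbc, pcS, hpc⟩ y hy
      refine ⟨ℓ, ⟨?_, hyℓ⟩, ?_⟩
      · rcases hpen with h | h
        · exact Finset.mem_union_left _ ((Set.Finite.mem_toFinset _).mpr h)
        · exact Finset.mem_union_right _ ((Set.Finite.mem_toFinset _).mpr h)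
      · rintro ℓ' ⟨h1, h2⟩
        rcases Finset.mem_union.mp h1 with h | h
        · exact hu ℓ' ⟨Or.inl ((Set.Finite.mem_toFinset _).mp h), h2⟩
        · exact hu ℓ' ⟨Or.inr ((Set.Finite.mem_toFinset _).mp h), h2⟩
    have e := sum_piecesPP ((pfin 1 pa).toFinset ∪ (pfin 2 pa).toFinset)
      ((hclsfin 0).diff : (clsPP S c 0 \ {pa}).Finite) cover3
    have hval1 : ∀ ℓ ∈ (pfin 1 pa).toFinset,
        (ℓ ∩ (clsPP S c 0 \ {pa})).ncard = (penPP S L c 0 pc).ncard - 1 := by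
      intro ℓ hℓ
      obtain ⟨hℓL, haℓ, hmeet⟩ := (Set.Finite.mem_toFinset _).mp hℓ
      have heq : ℓ ∩ (clsPP S c 0 \ {pa}) = (ℓ ∩ clsPP S c 0) \ {pa} :=
        (Set.inter_diff_assoc _ _ _).symm
      have hmem : pa ∈ ℓ ∩ clsPP S c 0 := ⟨haℓ, paS, hpa⟩
      rw [heq, Set.ncard_diff_singleton_of_mem hmem,
        count_eqPP hP1 hP2 hLS hc (show (0:Fin 3) ≠ 1 by decide) (show (0:Fin 3) ≠ 2 by decide)
          (show (1:Fin 3) ≠ 2 by decide) pcS hpc hℓL ⟨pa, haℓ, paS, hpa⟩ hmeet]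
    have hval2 : ∀ ℓ ∈ (pfin 2 pa).toFinset,
        (ℓ ∩ (clsPP S c 0 \ {pa})).ncard = (penPP S L c 0 pb).ncard - 1 := by
      intro ℓ hℓ
      obtain ⟨hℓL, haℓ, hmeet⟩ := (Set.Finite.mem_toFinset _).mp hℓ
      have heq : ℓ ∩ (clsPP S c 0 \ {pa}) = (ℓ ∩ clsPP S c 0) \ {pa} :=
        (Set.inter_diff_assoc _ _ _).symm
      have hmem : pa ∈ ℓ ∩ clsPP S c 0 := ⟨haℓ, paS, hpa⟩
      rw [heq, Set.ncard_diff_singleton_of_mem hmem,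
        count_eqPP hP1 hP2 hLS hc (show (0:Fin 3) ≠ 2 by decide) (show (0:Fin 3) ≠ 1 by decide)
          (show (2:Fin 3) ≠ 1 by decide) pbS hpb hℓL ⟨pa, haℓ, paS, hpa⟩ hmeet]
    have s1 : ∑ ℓ ∈ (pfin 1 pa).toFinset, (ℓ ∩ (clsPP S c 0 \ {pa})).ncard =
        (penPP S L c 1 pa).ncard * ((penPP S L c 0 pc).ncard - 1) := by
      rw [Finset.sum_congr rfl hval1, Finset.sum_const, smul_eq_mul,
        ← Set.ncard_eq_toFinset_card _ (pfin 1 pa)]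
    have s2 : ∑ ℓ ∈ (pfin 2 pa).toFinset, (ℓ ∩ (clsPP S c 0 \ {pa})).ncard =
        (penPP S L c 2 pa).ncard * ((penPP S L c 0 pb).ncard - 1) := by
      rw [Finset.sum_congr rfl hval2, Finset.sum_const, smul_eq_mul,
        ← Set.ncard_eq_toFinset_card _ (pfin 2 pa)]
    have hmem0 : pa ∈ clsPP S c 0 := ⟨paS, hpa⟩
    have lhs : (clsPP S c 0 \ {pa}).ncard = (clsPP S c 0).ncard - 1 :=
      Set.ncard_diff_singleton_of_mem hmem0
    rw [lhs] at e
    rw [e, Finset.sum_union hdisj_a, s1, s2]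
  -- Equation 4 : |B| - 1 = a1 * (b0 - 1) + c1 * (b2 - 1)
  have E4 : (clsPP S c 1).ncard - 1 =
      (penPP S L c 0 pb).ncard * ((penPP S L c 1 pc).ncard - 1) +
      (penPP S L c 2 pb).ncard * ((penPP S L c 1 pa).ncard - 1) := by
    have cover4 : ∀ y ∈ clsPP S c 1 \ {pb},
        ∃! ℓ, ℓ ∈ (pfin 0 pb).toFinset ∪ (pfin 2 pb).toFinset ∧ y ∈ ℓ := by
      intro y hy
      obtain ⟨ℓ, ⟨hpen, hyℓ⟩, hu⟩ := cover2PP hP1 hP2 hLS hc (show (1:Fin 3) ≠ 0 by decide)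
        (show (1:Fin 3) ≠ 2 by decide) (show (0:Fin 3) ≠ 2 by decide) pbS hpb hmcaL
        ⟨pa, hamca, paS, hpa⟩ ⟨pc, hcmca, pcS, hpc⟩ y hy
      refine ⟨ℓ, ⟨?_, hyℓ⟩, ?_⟩
      · rcases hpen with h | h
        · exact Finset.mem_union_left _ ((Set.Finite.mem_toFinset _).mpr h)
        · exact Finset.mem_union_right _ ((Set.Finite.mem_toFinset _).mpr h)
      · rintro ℓ' ⟨h1, h2⟩
        rcases Finset.mem_union.mp h1 with h | h
        · exact hu ℓ' ⟨Or.inl ((Set.Finite.mem_toFinset _).mp h), h2⟩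
        · exact hu ℓ' ⟨Or.inr ((Set.Finite.mem_toFinset _).mp h), h2⟩
    have e := sum_piecesPP ((pfin 0 pb).toFinset ∪ (pfin 2 pb).toFinset)
      ((hclsfin 1).diff : (clsPP S c 1 \ {pb}).Finite) cover4
    have hval1 : ∀ ℓ ∈ (pfin 0 pb).toFinset,
        (ℓ ∩ (clsPP S c 1 \ {pb})).ncard = (penPP S L c 1 pc).ncard - 1 := by
      intro ℓ hℓ
      obtain ⟨hℓL, hbℓ, hmeet⟩ := (Set.Finite.mem_toFinset _).mp hℓ
      have heq : ℓ ∩ (clsPP S c 1 \ {pb}) = (ℓ ∩ clsPP S c 1) \ {pb} :=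
        (Set.inter_diff_assoc _ _ _).symm
      have hmem : pb ∈ ℓ ∩ clsPP S c 1 := ⟨hbℓ, pbS, hpb⟩
      rw [heq, Set.ncard_diff_singleton_of_mem hmem,
        count_eqPP hP1 hP2 hLS hc (show (1:Fin 3) ≠ 0 by decide) (show (1:Fin 3) ≠ 2 by decide)
          (show (0:Fin 3) ≠ 2 by decide) pcS hpc hℓL ⟨pb, hbℓ, pbS, hpb⟩ hmeet]
    have hval2 : ∀ ℓ ∈ (pfin 2 pb).toFinset,
        (ℓ ∩ (clsPP S c 1 \ {pb})).ncard = (penPP S L c 1 pa).ncard - 1 := by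
      intro ℓ hℓ
      obtain ⟨hℓL, hbℓ, hmeet⟩ := (Set.Finite.mem_toFinset _).mp hℓ
      have heq : ℓ ∩ (clsPP S c 1 \ {pb}) = (ℓ ∩ clsPP S c 1) \ {pb} :=
        (Set.inter_diff_assoc _ _ _).symm
      have hmem : pb ∈ ℓ ∩ clsPP S c 1 := ⟨hbℓ, pbS, hpb⟩
      rw [heq, Set.ncard_diff_singleton_of_mem hmem,
        count_eqPP hP1 hP2 hLS hc (show (1:Fin 3) ≠ 2 by decide) (show (1:Fin 3) ≠ 0 by decide)
          (show (2:Fin 3) ≠ 0 by decide) paS hpa hℓL ⟨pb, hbℓ, pbS, hpb⟩ hmeet]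
    have s1 : ∑ ℓ ∈ (pfin 0 pb).toFinset, (ℓ ∩ (clsPP S c 1 \ {pb})).ncard =
        (penPP S L c 0 pb).ncard * ((penPP S L c 1 pc).ncard - 1) := by
      rw [Finset.sum_congr rfl hval1, Finset.sum_const, smul_eq_mul,
        ← Set.ncard_eq_toFinset_card _ (pfin 0 pb)]
    have s2 : ∑ ℓ ∈ (pfin 2 pb).toFinset, (ℓ ∩ (clsPP S c 1 \ {pb})).ncard =
        (penPP S L c 2 pb).ncard * ((penPP S L c 1 pa).ncard - 1) := by
      rw [Finset.sum_congr rfl hval2, Finset.sum_const, smul_eq_mul,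
        ← Set.ncard_eq_toFinset_card _ (pfin 2 pb)]
    have hmem0 : pb ∈ clsPP S c 1 := ⟨pbS, hpb⟩
    have lhs : (clsPP S c 1 \ {pb}).ncard = (clsPP S c 1).ncard - 1 :=
      Set.ncard_diff_singleton_of_mem hmem0
    rw [lhs] at e
    rw [e, Finset.sum_union hdisj_b, s1, s2]
  -- final arithmetic contradiction
  obtain ⟨a0, ha0⟩ : ∃ n, n = (penPP S L c 0 pc).ncard := ⟨_, rfl⟩
  obtain ⟨a1, ha1⟩ : ∃ n, n = (penPP S L c 0 pb).ncard := ⟨_, rfl⟩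
  obtain ⟨b0, hb0⟩ : ∃ n, n = (penPP S L c 1 pc).ncard := ⟨_, rfl⟩
  obtain ⟨b2, hb2⟩ : ∃ n, n = (penPP S L c 1 pa).ncard := ⟨_, rfl⟩
  obtain ⟨c1, hc1⟩ : ∃ n, n = (penPP S L c 2 pb).ncard := ⟨_, rfl⟩
  obtain ⟨c2, hc2⟩ : ∃ n, n = (penPP S L c 2 pa).ncard := ⟨_, rfl⟩
  obtain ⟨A, hA⟩ : ∃ n, n = (clsPP S c 0).ncard := ⟨_, rfl⟩
  obtain ⟨B, hB⟩ : ∃ n, n = (clsPP S c 1).ncard := ⟨_, rfl⟩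
  rw [← ha0] at E1 E3 h2a0
  rw [← ha1] at E1 E3 E4 h2a1
  rw [← hb0] at E2 E4 h2b0
  rw [← hb2] at E2 E3 E4 h2b2
  rw [← hc1] at E4 h2c1
  rw [← hc2] at E3 h2c2
  rw [← hA] at E1 E3
  rw [← hB] at E2 E4
  have h1A : 1 ≤ A := by
    rw [E1]; exact le_trans (by norm_num) (Nat.mul_le_mul h2a1 h2a0)
  have h1B : 1 ≤ B := by
    rw [E2]; exact le_trans (by norm_num) (Nat.mul_le_mul h2b2 h2b0)
  have h1a0 : 1 ≤ a0 := by omega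
  have h1a1 : 1 ≤ a1 := by omega
  have h1b0 : 1 ≤ b0 := by omega
  have h1b2 : 1 ≤ b2 := by omega
  zify [h1A, h1a0, h1a1] at E3
  zify [h1B, h1b0, h1b2] at E4
  zify at E1 E2
  have ha0z : (2:ℤ) ≤ a0 := by exact_mod_cast h2a0
  have ha1z : (2:ℤ) ≤ a1 := by exact_mod_cast h2a1
  have hb0z : (2:ℤ) ≤ b0 := by exact_mod_cast h2b0
  have hb2z : (2:ℤ) ≤ b2 := by exact_mod_cast h2b2
  have hc1z : (2:ℤ) ≤ c1 := by exact_mod_cast h2c1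
  have hc2z : (2:ℤ) ≤ c2 := by exact_mod_cast h2c2
  have key1 : ((a0:ℤ) - 1) * ((a1:ℤ) - b2) = ((a1:ℤ) - 1) * ((c2:ℤ) - 1) := by
    linear_combination E3 - E1
  have key2 : ((b0:ℤ) - 1) * ((b2:ℤ) - a1) = ((b2:ℤ) - 1) * ((c1:ℤ) - 1) := by
    linear_combination E4 - E2
  have hlt1 : (b2:ℤ) < a1 := by
    by_contra hge
    push_neg at hge
    nlinarith only [key1, hge, ha0z, ha1z, hc2z,
      mul_nonneg (show (0:ℤ) ≤ (a0:ℤ) - 1 by linarith only [ha0z])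
        (show (0:ℤ) ≤ (b2:ℤ) - a1 by linarith only [hge]),
      mul_pos (show (0:ℤ) < (a1:ℤ) - 1 by linarith only [ha1z])
        (show (0:ℤ) < (c2:ℤ) - 1 by linarith only [hc2z])]
  have hlt2 : (a1:ℤ) < b2 := by
    by_contra hge
    push_neg at hge
    nlinarith only [key2, hge, hb0z, hb2z, hc1z,
      mul_nonneg (show (0:ℤ) ≤ (b0:ℤ) - 1 by linarith only [hb0z])
        (show (0:ℤ) ≤ (a1:ℤ) - b2 by linarith only [hge]),
      mul_pos (show (0:ℤ) < (b2:ℤ) - 1 by linarith only [hb2z])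
        (show (0:ℤ) < (c1:ℤ) - 1 by linarith only [hc1z])]
  linarith only [hlt1, hlt2]
end

section
/- Let M = (S, I) be a loopless matroid that can be reduced to a 2χ(M)-colorable partition matroid. Then for every k with 1 ≤ k ≤ rank(M), the k-truncation M' = (M)_k of M (the matroid with independent sets {X ∈ I : |X| ≤ k}) can be reduced to a 2χ(M')-colorable partition matroid; that is, the family of matroids M reducible to a 2χ(M)-colorable partition matroid is closed under truncation. -/
open Set
open Classical

variable {α : Type*}

section AuxiliaryLemmas


noncomputable def clsOf (P : Set (Set α)) (e : α) : Set α :=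
  if h : ∃ c ∈ P, e ∈ c then h.choose else ∅

lemma clsOf_mem {P : Set (Set α)} {e : α} (he : ∃ c ∈ P, e ∈ c) :
    clsOf P e ∈ P ∧ e ∈ clsOf P e := by
  rw [clsOf, dif_pos he]
  exact ⟨he.choose_spec.1, he.choose_spec.2⟩

lemma clsOf_eq {P : Set (Set α)} (hdisj : ∀ c ∈ P, ∀ c' ∈ P, c ≠ c' → Disjoint c c')
    {e : α} {c : Set α} (hc : c ∈ P) (hec : e ∈ c) : clsOf P e = c := by
  obtain ⟨h1, h2⟩ := clsOf_mem ⟨c, hc, hec⟩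
  by_contra hne
  exact (hdisj _ h1 _ hc hne).ne_of_mem h2 hec rfl

lemma clsOf_injOn {P : Set (Set α)} (hdisj : ∀ c ∈ P, ∀ c' ∈ P, c ≠ c' → Disjoint c c')
    {X : Set α} (hX : X ⊆ ⋃₀ P) (h1 : ∀ c ∈ P, (X ∩ c).encard ≤ 1) :
    InjOn (clsOf P) X := by
  intro x hx y hy hxy
  obtain ⟨cx, hcx, hxcx⟩ := hX hx
  obtain ⟨cy, hcy, hycy⟩ := hX hy
  rw [clsOf_eq hdisj hcx hxcx, clsOf_eq hdisj hcy hycy] at hxy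
  subst hxy
  exact (encard_le_one_iff.mp (h1 _ hcx)) x y ⟨hx, hxcx⟩ ⟨hy, hycy⟩

lemma transversal_encard_le {P : Set (Set α)}
    (hdisj : ∀ c ∈ P, ∀ c' ∈ P, c ≠ c' → Disjoint c c')
    {X : Set α} (hX : X ⊆ ⋃₀ P) (h1 : ∀ c ∈ P, (X ∩ c).encard ≤ 1) :
    X.encard ≤ P.encard := by
  calc X.encard = (clsOf P '' X).encard := ((clsOf_injOn hdisj hX h1).encard_image).symm
  _ ≤ P.encard := encard_mono (by rintro _ ⟨x, hx, rfl⟩; exact (clsOf_mem (hX hx)).1)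

/-- The partition matroid determined by a partition `P` of a finite set `E`. -/
noncomputable def partitionMatroid {E : Set α} (hE : E.Finite) (P : Set (Set α))
    (hcover : ⋃₀ P = E) (hdisj : ∀ c ∈ P, ∀ c' ∈ P, c ≠ c' → Disjoint c c') : Matroid α :=
  (IndepMatroid.ofFinite hE (fun X => X ⊆ E ∧ ∀ c ∈ P, (X ∩ c).encard ≤ 1)
    ⟨empty_subset _, fun c _ => by simp⟩
    (fun I J hJ hIJ => ⟨hIJ.trans hJ.1, fun c hc =>
      le_trans (encard_mono (inter_subset_inter_left _ hIJ)) (hJ.2 c hc)⟩)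
    (by
      rintro I J ⟨hIE, hI⟩ ⟨hJE, hJ⟩ hlt
      have hIs : I ⊆ ⋃₀ P := hcover ▸ hIE
      have hJs : J ⊆ ⋃₀ P := hcover ▸ hJE
      have hIinj := clsOf_injOn hdisj hIs hI
      have hJinj := clsOf_injOn hdisj hJs hJ
      have hIfin : I.Finite := hE.subset hIE
      have hlt' : (clsOf P '' I).ncard < (clsOf P '' J).ncard := by
        rwa [ncard_image_of_injOn hIinj, ncard_image_of_injOn hJinj]
      have hns : ¬ (clsOf P '' J ⊆ clsOf P '' I) := fun hss =>
        hlt'.not_ge (ncard_le_ncard hss (hIfin.image _))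
      obtain ⟨c, ⟨e, heJ, rfl⟩, hcI⟩ := not_subset.mp hns
      have heI : e ∉ I := fun h => hcI (mem_image_of_mem _ h)
      obtain ⟨hcls_mem, hecls⟩ := clsOf_mem (hJs heJ)
      refine ⟨e, heJ, heI, insert_subset (hJE heJ) hIE, fun c' hc' => ?_⟩
      by_cases hcc : c' = clsOf P e
      · have hsub : insert e I ∩ c' ⊆ {e} := by
          rintro x ⟨hx, hxc'⟩
          rcases hx with rfl | hxI
          · rfl
          · exfalso
            apply hcI
            have hx' : clsOf P x = c' := clsOf_eq hdisj (hcc ▸ hc') hxc'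
            rw [← hcc, ← hx']
            exact mem_image_of_mem _ hxI
        exact le_trans (encard_mono hsub) (by simp)
      · have hsub : insert e I ∩ c' ⊆ I ∩ c' := by
          rintro x ⟨hx, hxc'⟩
          rcases hx with rfl | hxI
          · exact absurd rfl ((hdisj _ hc' _ hcls_mem hcc).ne_of_mem hxc' hecls)
          · exact ⟨hxI, hxc'⟩
        exact le_trans (encard_mono hsub) (hI c' hc'))
    (fun I hI => hI.1)).matroid

@[simp] lemma partitionMatroid_E {E : Set α} (hE : E.Finite) (P : Set (Set α))
    (hcover : ⋃₀ P = E) (hdisj : ∀ c ∈ P, ∀ c' ∈ P, c ≠ c' → Disjoint c c') :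
    (partitionMatroid hE P hcover hdisj).E = E := rfl

@[simp] lemma partitionMatroid_indep {E : Set α} (hE : E.Finite) (P : Set (Set α))
    (hcover : ⋃₀ P = E) (hdisj : ∀ c ∈ P, ∀ c' ∈ P, c ≠ c' → Disjoint c c') (X : Set α) :
    (partitionMatroid hE P hcover hdisj).Indep X ↔
      X ⊆ E ∧ ∀ c ∈ P, (X ∩ c).encard ≤ 1 := by
  simp [partitionMatroid]



lemma encard_sUnion_finset (F : Finset (Set α))
    (hdisj : ∀ c ∈ F, ∀ c' ∈ F, c ≠ c' → Disjoint c c') :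
    (⋃₀ (F : Set (Set α))).encard = ∑ c ∈ F, c.encard := by
  classical
  induction F using Finset.induction_on with
  | empty => simp
  | @insert a F ha ih =>
    rw [Finset.coe_insert, sUnion_insert, Finset.sum_insert ha, encard_union_eq, ih]
    · intro c hc c' hc' hne
      exact hdisj c (Finset.mem_insert_of_mem hc) c' (Finset.mem_insert_of_mem hc') hne
    · rw [disjoint_sUnion_right]
      intro c hc
      exact hdisj a (Finset.mem_insert_self a F) c (Finset.mem_insert_of_mem hc)
        (fun h => ha (h ▸ hc))

lemma encard_iUnion_fin_le : ∀ (m : ℕ) (I : Fin m → Set α),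
    (⋃ i, I i).encard ≤ ∑ i, (I i).encard
  | 0, I => by simp
  | (m+1), I => by
    rw [Fin.sum_univ_succ]
    have h : (⋃ i, I i) = I 0 ∪ ⋃ i : Fin m, I i.succ := by
      ext x
      simp only [mem_iUnion, mem_union]
      exact ⟨fun ⟨i, hi⟩ => by
        rcases Fin.eq_zero_or_eq_succ i with rfl | ⟨j, rfl⟩
        · exact Or.inl hi
        · exact Or.inr ⟨j, hi⟩,
        fun h => h.elim (fun h => ⟨0, h⟩) (fun ⟨j, hj⟩ => ⟨j.succ, hj⟩)⟩
    rw [h]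
    exact (encard_union_le _ _).trans (add_le_add le_rfl (encard_iUnion_fin_le m _))

lemma merge_lemma (C : ℕ) :
    ∀ (n : ℕ) (Q : Set (Set α)), Q.Finite → Q.ncard = n → (∀ c ∈ Q, c.Finite) →
    (∀ c ∈ Q, ∀ c' ∈ Q, c ≠ c' → Disjoint c c') → (∀ c ∈ Q, c.ncard ≤ C) →
    ∃ Q' : Set (Set α), Q'.Finite ∧ (∀ c ∈ Q', ∀ c' ∈ Q', c ≠ c' → Disjoint c c') ∧
      ⋃₀ Q' = ⋃₀ Q ∧ (∀ c ∈ Q', c.ncard ≤ C) ∧ (∀ c ∈ Q, ∃ c' ∈ Q', c ⊆ c') ∧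
      (∀ c ∈ Q', ∀ c' ∈ Q', c ≠ c' → C < c.ncard + c'.ncard) := by
  intro n
  induction n using Nat.strong_induction_on with
  | _ n ih =>
  intro Q hQfin hQcard hmemfin hdisj hsize
  by_cases hterm : ∀ c ∈ Q, ∀ c' ∈ Q, c ≠ c' → C < c.ncard + c'.ncard
  · exact ⟨Q, hQfin, hdisj, rfl, hsize, fun c hc => ⟨c, hc, subset_rfl⟩, hterm⟩
  push_neg at hterm
  obtain ⟨c, hc, c', hc', hne, hle⟩ := hterm
  set Q₂ : Set (Set α) := insert (c ∪ c') (Q \ {c, c'}) with hQ₂def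
  have hnotmem : c ∪ c' ∉ Q \ {c, c'} := by
    rintro ⟨hmem, hnot⟩
    simp only [mem_insert_iff, mem_singleton_iff, not_or] at hnot
    have h1 : Disjoint c (c ∪ c') := hdisj c hc _ hmem (fun h => hnot.1 h.symm)
    have h2 : Disjoint c' (c ∪ c') := hdisj c' hc' _ hmem (fun h => hnot.2 h.symm)
    have hc0 : c = ∅ := by
      have := h1.mono_right subset_union_left
      rwa [disjoint_self, bot_eq_empty] at this
    have hc'0 : c' = ∅ := by
      have := h2.mono_right subset_union_right
      rwa [disjoint_self, bot_eq_empty] at this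
    exact hne (hc0.trans hc'0.symm)
  have hpair_sub : {c, c'} ⊆ Q := by
    rintro x (rfl | rfl)
    exacts [hc, hc']
  have hQ2fin : Q₂.Finite := hQfin.diff.insert _
  have hQ2card : Q₂.ncard < n := by
    have h1 : (Q \ {c, c'}).ncard = Q.ncard - 2 := by
      rw [ncard_diff hpair_sub, ncard_pair hne]
    have h2 : Q₂.ncard = (Q \ {c, c'}).ncard + 1 :=
      ncard_insert_of_notMem hnotmem hQfin.diff
    have h3 : 2 ≤ Q.ncard := by
      rw [← ncard_pair hne]
      exact ncard_le_ncard hpair_sub hQfin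
    omega
  have hmemfin₂ : ∀ d ∈ Q₂, d.Finite := by
    rintro d (rfl | ⟨hd, -⟩)
    · exact (hmemfin c hc).union (hmemfin c' hc')
    · exact hmemfin d hd
  have hdisj₂ : ∀ d ∈ Q₂, ∀ d' ∈ Q₂, d ≠ d' → Disjoint d d' := by
    have haux : ∀ d ∈ Q \ {c, c'}, Disjoint (c ∪ c') d := by
      rintro d ⟨hd, hdnot⟩
      simp only [mem_insert_iff, mem_singleton_iff, not_or] at hdnot
      exact disjoint_union_left.mpr
        ⟨hdisj c hc d hd (fun h => hdnot.1 h.symm), hdisj c' hc' d hd (fun h => hdnot.2 h.symm)⟩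
    rintro d (rfl | ⟨hd, hdnot⟩) d' (rfl | ⟨hd', hdnot'⟩) hne'
    · exact absurd rfl hne'
    · exact haux d' ⟨hd', hdnot'⟩
    · exact (haux d ⟨hd, hdnot⟩).symm
    · exact hdisj d hd d' hd' hne'
  have hsize₂ : ∀ d ∈ Q₂, d.ncard ≤ C := by
    rintro d (rfl | ⟨hd, -⟩)
    · exact le_trans (ncard_union_le c c') hle
    · exact hsize d hd
  have hcover₂ : ⋃₀ Q₂ = ⋃₀ Q := by
    apply subset_antisymm
    · rw [hQ₂def, sUnion_insert]
      apply union_subset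
      · exact union_subset (subset_sUnion_of_mem hc) (subset_sUnion_of_mem hc')
      · exact sUnion_subset fun d hd => subset_sUnion_of_mem hd.1
    · rintro x ⟨d, hd, hxd⟩
      by_cases hdcc : d = c ∨ d = c'
      · refine ⟨c ∪ c', mem_insert _ _, ?_⟩
        rcases hdcc with rfl | rfl
        · exact Or.inl hxd
        · exact Or.inr hxd
      · push_neg at hdcc
        exact ⟨d, mem_insert_of_mem _ ⟨hd, by simp [hdcc.1, hdcc.2]⟩, hxd⟩
  obtain ⟨Q', hQ'fin, hdisj', hcover', hsize', hcontain', hterm'⟩ :=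
    ih Q₂.ncard hQ2card Q₂ hQ2fin rfl hmemfin₂ hdisj₂ hsize₂
  refine ⟨Q', hQ'fin, hdisj', hcover'.trans hcover₂, hsize', ?_, hterm'⟩
  intro d hd
  by_cases hdcc : d = c ∨ d = c'
  · obtain ⟨d', hd', hsub⟩ := hcontain' (c ∪ c') (mem_insert _ _)
    refine ⟨d', hd', ?_⟩
    rcases hdcc with rfl | rfl
    · exact subset_union_left.trans hsub
    · exact subset_union_right.trans hsub
  · push_neg at hdcc
    exact hcontain' d (mem_insert_of_mem _ ⟨hd, by simp [hdcc.1, hdcc.2]⟩)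

lemma count_lemma {E : Set α} (hE : E.Finite) (k x : ℕ) (hk : 1 ≤ k)
    (hn : E.ncard ≤ k * x) (Q' : Set (Set α)) (hQfin : Q'.Finite)
    (hcover : ⋃₀ Q' = E) (hdisj : ∀ c ∈ Q', ∀ c' ∈ Q', c ≠ c' → Disjoint c c')
    (hterm : ∀ c ∈ Q', ∀ c' ∈ Q', c ≠ c' → 2 * x < c.ncard + c'.ncard) :
    Q'.ncard ≤ k := by
  by_contra hlt
  push_neg at hlt
  classical
  set F := hQfin.toFinset with hF
  have hFmem : ∀ {c}, c ∈ F ↔ c ∈ Q' := fun {c} => hQfin.mem_toFinset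
  have hFcard : F.card = Q'.ncard := (ncard_eq_toFinset_card _ hQfin).symm
  have hmemfin : ∀ c ∈ F, c.Finite := fun c hc =>
    hE.subset (hcover ▸ subset_sUnion_of_mem (hFmem.mp hc))
  -- total size
  have hsum_eq : ∑ c ∈ F, c.ncard = E.ncard := by
    have h1 : (⋃₀ (F : Set (Set α))).encard = ∑ c ∈ F, c.encard :=
      encard_sUnion_finset F (fun c hc c' hc' hne => hdisj c (hFmem.mp hc) c' (hFmem.mp hc') hne)
    rw [hQfin.coe_toFinset, hcover] at h1
    have h2 : ((∑ c ∈ F, c.ncard : ℕ) : ℕ∞) = (E.ncard : ℕ∞) := by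
      rw [Nat.cast_sum, hE.cast_ncard_eq, h1]
      exact Finset.sum_congr rfl fun c hc => (hmemfin c hc).cast_ncard_eq
    exact_mod_cast h2
  set B := F.filter (fun c => c.ncard ≤ x) with hB
  have hBcard : B.card ≤ 1 := by
    refine Finset.card_le_one.mpr fun a ha b hb => ?_
    by_contra hne
    have h1 := hterm a (hFmem.mp (Finset.mem_of_mem_filter a ha)) b
      (hFmem.mp (Finset.mem_of_mem_filter b hb)) hne
    have h2 := (Finset.mem_filter.mp ha).2
    have h3 := (Finset.mem_filter.mp hb).2
    omega
  set F'' := F \ B with hF''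
  have hF''card : k ≤ F''.card := by
    have hBF : B ⊆ F := hB ▸ Finset.filter_subset (fun c => c.ncard ≤ x) F
    have h1 : F''.card = F.card - B.card := Finset.card_sdiff_of_subset hBF
    omega
  have hlarge : ∀ c ∈ F'', x + 1 ≤ c.ncard := by
    intro c hcF
    have h1 : c ∉ B := (Finset.mem_sdiff.mp hcF).2
    have h2 : c ∈ F := (Finset.mem_sdiff.mp hcF).1
    rw [hB, Finset.mem_filter] at h1
    push_neg at h1
    exact h1 h2
  have hsum_ge : k * (x + 1) ≤ ∑ c ∈ F'', c.ncard := by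
    calc k * (x + 1) ≤ F''.card * (x + 1) := Nat.mul_le_mul_right _ hF''card
    _ ≤ ∑ c ∈ F'', c.ncard := by
        rw [← Finset.sum_const_nat fun c hc => rfl]
        · exact Finset.sum_le_sum hlarge
  have hsum_le : ∑ c ∈ F'', c.ncard ≤ ∑ c ∈ F, c.ncard :=
    Finset.sum_le_sum_of_subset (Finset.sdiff_subset)
  have hmul : k * (x + 1) = k * x + k := by ring
  omega

lemma isColorable_exists (M' : Matroid α) (hfin : M'.E.Finite)
    (h : ∀ e ∈ M'.E, M'.Indep {e}) : ∃ m, M'.IsColorable m := by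
  classical
  refine ⟨hfin.toFinset.card, fun i => {(hfin.toFinset.equivFin.symm i : α)}, ?_, ?_, ?_⟩
  · intro i
    exact h _ (hfin.mem_toFinset.mp (hfin.toFinset.equivFin.symm i).2)
  · ext y
    simp only [mem_iUnion, mem_singleton_iff]
    constructor
    · rintro ⟨i, rfl⟩
      exact hfin.mem_toFinset.mp (hfin.toFinset.equivFin.symm i).2
    · intro hy
      refine ⟨hfin.toFinset.equivFin ⟨y, hfin.mem_toFinset.mpr hy⟩, ?_⟩
      rw [Equiv.symm_apply_apply]
  · intro i j hij
    rw [disjoint_singleton]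
    intro hcontra
    exact hij (hfin.toFinset.equivFin.symm.injective (Subtype.ext hcontra))

end AuxiliaryLemmas

/-- The family of matroids `M` reducible to a `2χ(M)`-colorable partition matroid is
closed under truncation: if `M` reduces to a `2χ(M)`-colorable partition matroid and `M'`
is the `k`-truncation of `M` (for `1 ≤ k ≤ rank M`), then `M'` reduces to a
`2χ(M')`-colorable partition matroid. -/
theorem statement_19 (M : Matroid α) (hfin : M.E.Finite)
    (hloopless : ∀ e ∈ M.E, M.Indep {e})
    (hred : ∃ (N : Matroid α) (P : Set (Set α)), N.IsPartitionMatroid P ∧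
      N.Reduction M ∧ ∀ c ∈ P, c.encard ≤ ((2 * M.chi : ℕ) : ℕ∞))
    (k : ℕ) (hk1 : 1 ≤ k) (hk2 : (k : ℕ∞) ≤ M.rkE)
    (M' : Matroid α) (hE' : M'.E = M.E)
    (hInd' : ∀ X, M'.Indep X ↔ M.Indep X ∧ X.encard ≤ (k : ℕ∞)) :
    ∃ (N' : Matroid α) (P' : Set (Set α)), N'.IsPartitionMatroid P' ∧
      N'.Reduction M' ∧ ∀ c ∈ P', c.encard ≤ ((2 * M'.chi : ℕ) : ℕ∞) := by
  classical
  obtain ⟨N, P, ⟨hPcover, hPdisj, hPindep⟩, ⟨hNE, hNred⟩, hPsize⟩ := hred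
  have hPE : ⋃₀ P = M.E := hPcover.trans hNE
  -- the chromatic number of M' is attained
  set x := M'.chi with hxdef
  have hx' : M'.IsColorable x := by
    have hne : {m | M'.IsColorable m}.Nonempty := by
      obtain ⟨m, hm⟩ := isColorable_exists M' (hE' ▸ hfin)
        (fun e he => (hInd' {e}).mpr ⟨hloopless e (hE' ▸ he),
          by rw [encard_singleton]; exact_mod_cast hk1⟩)
      exact ⟨m, hm⟩
    rw [hxdef, Matroid.chi]
    exact Nat.sInf_mem hne
  obtain ⟨I, hIind, hIcover, hIdisj⟩ := hx'
  -- χ(M) ≤ χ(M')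
  have hchiM : M.chi ≤ x := by
    rw [Matroid.chi]
    apply Nat.sInf_le
    exact ⟨I, fun i => ((hInd' _).mp (hIind i)).1, by rw [hIcover, hE'], hIdisj⟩
  -- |E| ≤ k * χ(M')
  have hn : M.E.ncard ≤ k * x := by
    have h1 : M.E.encard ≤ ((k * x : ℕ) : ℕ∞) := by
      calc M.E.encard = (⋃ i, I i).encard := by rw [hIcover, hE']
      _ ≤ ∑ i, (I i).encard := encard_iUnion_fin_le x I
      _ ≤ ∑ _i : Fin x, (k : ℕ∞) :=
          Finset.sum_le_sum fun i _ => ((hInd' _).mp (hIind i)).2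
      _ = ((k * x : ℕ) : ℕ∞) := by
          rw [Finset.sum_const, Finset.card_univ, Fintype.card_fin, nsmul_eq_mul]
          push_cast; ring
    exact (encard_le_coe_iff_finite_ncard_le.mp h1).2
  -- P is finite and consists of finite classes bounded by 2x
  have hmemfinP : ∀ c ∈ P, c.Finite := fun c hc =>
    hfin.subset (hPE ▸ subset_sUnion_of_mem hc)
  have hPfin : P.Finite := by
    have h2 : {c ∈ P | c.Nonempty} ⊆ clsOf P '' M.E := by
      rintro c ⟨hc, e, he⟩
      exact ⟨e, hPE ▸ subset_sUnion_of_mem hc he, clsOf_eq hPdisj hc he⟩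
    refine (((hfin.image (clsOf P)).subset h2).insert ∅).subset fun c hc => ?_
    rcases eq_or_ne c ∅ with rfl | hne
    · exact mem_insert _ _
    · exact mem_insert_of_mem _ ⟨hc, nonempty_iff_ne_empty.mpr hne⟩
  have hsizeP : ∀ c ∈ P, c.ncard ≤ 2 * x := by
    intro c hc
    have h1 := hPsize c hc
    have h2 := (encard_le_coe_iff_finite_ncard_le.mp h1).2
    omega
  -- merge the classes of P
  obtain ⟨Q', hQ'fin, hdisj', hcover', hsize', hcontain', hterm'⟩ :=
    merge_lemma (2 * x) P.ncard P hPfin rfl hmemfinP hPdisj hsizeP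
  have hQ'E : ⋃₀ Q' = M.E := hcover'.trans hPE
  have hQ'card : Q'.ncard ≤ k := count_lemma hfin k x hk1 hn Q' hQ'fin hQ'E hdisj' hterm'
  -- the new partition matroid
  refine ⟨partitionMatroid hfin Q' hQ'E hdisj', Q',
    ⟨by rw [partitionMatroid_E]; exact hQ'E, hdisj', fun X => by
      rw [partitionMatroid_indep, partitionMatroid_E]⟩, ⟨?_, ?_⟩, ?_⟩
  · rw [partitionMatroid_E, hE']
  · intro X hX
    rw [partitionMatroid_indep] at hX
    obtain ⟨hXE, hX1⟩ := hX
    refine (hInd' X).mpr ⟨hNred X ((hPindep X).mpr ⟨hNE ▸ hXE, ?_⟩), ?_⟩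
    · intro c hc
      obtain ⟨c', hc', hsub⟩ := hcontain' c hc
      exact le_trans (encard_mono (inter_subset_inter_right _ hsub)) (hX1 c' hc')
    · calc X.encard ≤ Q'.encard :=
            transversal_encard_le hdisj' (hQ'E ▸ hXE) hX1
      _ = (Q'.ncard : ℕ∞) := hQ'fin.cast_ncard_eq.symm
      _ ≤ (k : ℕ∞) := Nat.cast_le.mpr hQ'card
  · intro c hc
    have hcfin : c.Finite := hfin.subset (hQ'E ▸ subset_sUnion_of_mem hc)
    calc c.encard = (c.ncard : ℕ∞) := hcfin.cast_ncard_eq.symm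
    _ ≤ ((2 * M'.chi : ℕ) : ℕ∞) := Nat.cast_le.mpr (hsize' c hc)
end
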